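/- With h defined on the closed strip S̄ = {z : 1/2 ≤ Im z ≤ 1} by h(x+iy) = h_y(x)x + iy as above, the Jacobian determinant of h, where it exists, equals h_y(x) + h_y'(x)·x and is at least 1 almost everywhere in S. -/

import Mathlib

open Set MeasureTheory Filter Topology

/-- The slice function `h_y`: 1 on the slice of the diamond `W₀`, 4 for `|x| ≥ y`,
and linear in `|x|` in between. -/
noncomputable def hy (y x : ℝ) : ℝ :=
  if |x| + |y - 3/4| < 1/4 then 1
  else if y ≤ |x| then 4
  else if y ≤ 3/4 then 6 * |x| - 6 * y + 4
  else (3 * |x| + 5 * y - 4) / (2 * y - 1)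

/-- The map `h(x + iy) = h_y(x)·x + iy`, viewed as a map of `ℝ²`. -/
noncomputable def H : ℝ × ℝ → ℝ × ℝ := fun q => (hy q.2 q.1 * q.1, q.2)

/-- The open strip `S = {(x, y) : 1/2 < y < 1}`. -/
def Sopen : Set (ℝ × ℝ) := {q : ℝ × ℝ | 1/2 < q.2 ∧ q.2 < 1}

lemma det_snd (L : (ℝ × ℝ) →L[ℝ] (ℝ × ℝ)) (h : ∀ u, (L u).2 = u.2) :
    L.det = (L (1, 0)).1 := by
  have : L.det = LinearMap.det (L : (ℝ×ℝ) →ₗ[ℝ] (ℝ×ℝ)) := rfl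
  rw [this, ← LinearMap.det_toMatrix (Module.Basis.finTwoProd ℝ), Matrix.det_fin_two]
  simp [LinearMap.toMatrix_apply, h]

lemma graph_null (f : ℝ → ℝ) (hf : Measurable f) : volume {q : ℝ × ℝ | q.2 = f q.1} = 0 := by
  have hs : MeasurableSet {q : ℝ × ℝ | q.2 = f q.1} :=
    measurableSet_eq_fun measurable_snd (hf.comp measurable_fst)
  rw [show (volume : Measure (ℝ×ℝ)) = (volume : Measure ℝ).prod volume from rfl,
    Measure.prod_apply hs]
  simp [Set.preimage]

lemma fderiv_det_eq (q : ℝ×ℝ) (φ : ℝ×ℝ → ℝ) (L : (ℝ×ℝ) →L[ℝ] ℝ)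
    (hφ : HasFDerivAt φ L q) (hH : H =ᶠ[𝓝 q] fun p => (φ p, p.2)) :
    (fderiv ℝ H q).det = L (1, 0) := by
  have h1 : HasFDerivAt (fun p : ℝ×ℝ => (φ p, p.2))
      (L.prod (ContinuousLinearMap.snd ℝ ℝ ℝ)) q := hφ.prodMk hasFDerivAt_snd
  rw [hH.fderiv_eq, h1.fderiv, det_snd _ (fun u => by simp)]
  simp

lemma sign_aux (x : ℝ) (hx : x ≠ 0) :
    ∃ ε : ℝ, ε * ε = 1 ∧ ∀ᶠ t in 𝓝 x, |t| = ε * t := by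
  rcases hx.lt_or_gt with h | h
  · exact ⟨-1, by norm_num, (isOpen_Iio.eventually_mem h).mono fun t ht => by
      rw [abs_of_neg ht]; ring⟩
  · exact ⟨1, by norm_num, (isOpen_Ioi.eventually_mem h).mono fun t ht => by
      rw [abs_of_pos ht]; ring⟩

theorem stmt3 :
    ∀ᵐ q ∂(volume.restrict Sopen), DifferentiableAt ℝ H q →
      (fderiv ℝ H q).det = hy q.2 q.1 + deriv (fun x => hy q.2 x) q.1 * q.1 ∧
      1 ≤ (fderiv ℝ H q).det := by
  have hN : ∀ᵐ q : ℝ×ℝ ∂volume,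
      ¬(q.2 = 3/4 ∨ |q.1| + |q.2 - 3/4| = 1/4 ∨ |q.1| = q.2) := by
    rw [ae_iff]; push_neg
    refine measure_mono_null (t := {q : ℝ×ℝ | q.2 = (3:ℝ)/4} ∪ {q : ℝ×ℝ | q.2 = 1 - |q.1|} ∪
        {q : ℝ×ℝ | q.2 = 1/2 + |q.1|} ∪ {q : ℝ×ℝ | q.2 = |q.1|}) (fun q hq => ?_) ?_
    · simp only [Set.mem_setOf_eq, not_not] at hq
      rcases hq with h | h | h
      · exact Or.inl (Or.inl (Or.inl h))
      · rcases abs_cases (q.2 - 3/4) with ⟨habs, _⟩ | ⟨habs, _⟩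
        · exact Or.inl (Or.inl (Or.inr (by simp only [Set.mem_setOf_eq]; rw [habs] at h; linarith)))
        · exact Or.inl (Or.inr (by simp only [Set.mem_setOf_eq]; rw [habs] at h; linarith))
      · exact Or.inr (by simp only [Set.mem_setOf_eq]; exact h.symm)
    · refine measure_union_null (measure_union_null (measure_union_null ?_ ?_) ?_) ?_
      · exact graph_null (fun _ => 3/4) measurable_const
      · exact graph_null (fun x => 1 - |x|) (by fun_prop)
      · exact graph_null (fun x => 1/2 + |x|) (by fun_prop)
      · exact graph_null (fun x => |x|) (by fun_prop)
  have hS : ∀ᵐ q ∂(volume.restrict Sopen), q ∈ Sopen :=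
    ae_restrict_mem (by
      have : Sopen = {q : ℝ×ℝ | 1/2 < q.2} ∩ {q : ℝ×ℝ | q.2 < 1} := rfl
      rw [this]
      exact (measurableSet_lt measurable_const measurable_snd).inter
        (measurableSet_lt measurable_snd measurable_const))
  filter_upwards [ae_restrict_of_ae hN, hS] with q hq hqS _
  push_neg at hq
  obtain ⟨h34, hdiam, habs⟩ := hq
  obtain ⟨hy1, hy2⟩ := hqS
  rcases hdiam.lt_or_gt with hlt | hgt
  · -- Region A : inside the diamond, hy = 1 locally, H = id locally
    have hev : ∀ᶠ p : ℝ×ℝ in 𝓝 q, |p.1| + |p.2 - 3/4| < 1/4 :=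
      ContinuousAt.eventually_lt (by fun_prop) continuousAt_const hlt
    have hH : H =ᶠ[𝓝 q] fun p => (p.1, p.2) := by
      filter_upwards [hev] with p hp
      have : hy p.2 p.1 = 1 := by rw [hy, if_pos hp]
      simp [H, this]
    have hdet : (fderiv ℝ H q).det = 1 := by
      rw [fderiv_det_eq q _ (ContinuousLinearMap.fst ℝ ℝ ℝ) hasFDerivAt_fst hH]
      simp
    have hev1 : ∀ᶠ x : ℝ in 𝓝 q.1, |x| + |q.2 - 3/4| < 1/4 :=
      ContinuousAt.eventually_lt (by fun_prop) continuousAt_const hlt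
    have hder : deriv (fun x => hy q.2 x) q.1 = 0 := by
      have hEq : (fun x => hy q.2 x) =ᶠ[𝓝 q.1] (fun _ => (1:ℝ)) := by
        filter_upwards [hev1] with x hx
        rw [hy, if_pos hx]
      rw [hEq.deriv_eq]
      simp
    rw [hdet, hder]
    refine ⟨?_, le_refl 1⟩
    rw [hy, if_pos hlt]; ring
  rcases habs.lt_or_gt with hin | hout
  swap
  · -- Region B : |x| > y, hy = 4 locally
    have h1 : ∀ᶠ p : ℝ×ℝ in 𝓝 q, (1:ℝ)/4 < |p.1| + |p.2 - 3/4| :=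
      ContinuousAt.eventually_lt continuousAt_const (by fun_prop) hgt
    have h2 : ∀ᶠ p : ℝ×ℝ in 𝓝 q, p.2 < |p.1| :=
      ContinuousAt.eventually_lt (by fun_prop) (by fun_prop) hout
    have hH : H =ᶠ[𝓝 q] fun p => (4 * p.1, p.2) := by
      filter_upwards [h1, h2] with p hp1 hp2
      have : hy p.2 p.1 = 4 := by rw [hy, if_neg (not_lt.2 hp1.le), if_pos hp2.le]
      simp [H, this]
    have hdet : (fderiv ℝ H q).det = 4 := by
      rw [fderiv_det_eq q _ _ (hasFDerivAt_fst.const_mul (4:ℝ)) hH]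
      simp
    have h1' : ∀ᶠ x : ℝ in 𝓝 q.1, (1:ℝ)/4 < |x| + |q.2 - 3/4| :=
      ContinuousAt.eventually_lt continuousAt_const (by fun_prop) hgt
    have h2' : ∀ᶠ x : ℝ in 𝓝 q.1, q.2 < |x| :=
      ContinuousAt.eventually_lt continuousAt_const (by fun_prop) hout
    have hder : deriv (fun x => hy q.2 x) q.1 = 0 := by
      have hEq : (fun x => hy q.2 x) =ᶠ[𝓝 q.1] (fun _ => (4:ℝ)) := by
        filter_upwards [h1', h2'] with x hx1 hx2
        rw [hy, if_neg (not_lt.2 hx1.le), if_pos hx2.le]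
      rw [hEq.deriv_eq]
      simp
    rw [hdet, hder, hy, if_neg (not_lt.2 hgt.le), if_pos hout.le]
    norm_num
  have hx0 : q.1 ≠ 0 := by
    intro h0
    rw [h0] at hgt
    have : |q.2 - 3/4| < 1/4 := by rw [abs_lt]; constructor <;> linarith
    simp at hgt
    linarith
  obtain ⟨ε, hε1, hεev⟩ := sign_aux q.1 hx0
  have hεq : |q.1| = ε * q.1 := hεev.self_of_nhds
  have hεp : ∀ᶠ p : ℝ×ℝ in 𝓝 q, |p.1| = ε * p.1 :=
    (continuous_fst.tendsto q).eventually hεev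
  have h1 : ∀ᶠ p : ℝ×ℝ in 𝓝 q, (1:ℝ)/4 < |p.1| + |p.2 - 3/4| :=
    ContinuousAt.eventually_lt continuousAt_const (by fun_prop) hgt
  have h2 : ∀ᶠ p : ℝ×ℝ in 𝓝 q, |p.1| < p.2 :=
    ContinuousAt.eventually_lt (by fun_prop) (by fun_prop) hin
  have h1' : ∀ᶠ x : ℝ in 𝓝 q.1, (1:ℝ)/4 < |x| + |q.2 - 3/4| :=
    ContinuousAt.eventually_lt continuousAt_const (by fun_prop) hgt
  have h2' : ∀ᶠ x : ℝ in 𝓝 q.1, |x| < q.2 :=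
    ContinuousAt.eventually_lt (by fun_prop) continuousAt_const hin
  rcases h34.lt_or_gt with h34l | h34r
  · -- Region C : 1/2 < y < 3/4
    have h3 : ∀ᶠ p : ℝ×ℝ in 𝓝 q, p.2 < 3/4 :=
      ContinuousAt.eventually_lt (by fun_prop) continuousAt_const h34l
    have hH : H =ᶠ[𝓝 q] fun p => ((6 * (ε * p.1) - 6 * p.2 + 4) * p.1, p.2) := by
      filter_upwards [h1, h2, h3, hεp] with p hp1 hp2 hp3 hp4
      have : hy p.2 p.1 = 6 * (ε * p.1) - 6 * p.2 + 4 := by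
        rw [hy, if_neg (not_lt.2 hp1.le), if_neg (not_le.2 hp2), if_pos hp3.le, hp4]
      simp [H, this]
    have hφ := (((((hasFDerivAt_fst (𝕜 := ℝ) (p := q)).const_mul ε).const_mul 6).sub
        ((hasFDerivAt_snd (𝕜 := ℝ) (p := q)).const_mul 6)).add_const 4).mul
        (hasFDerivAt_fst (𝕜 := ℝ) (p := q))
    have hdet : (fderiv ℝ H q).det = 12 * (ε * q.1) - 6 * q.2 + 4 := by
      rw [fderiv_det_eq q _ _ hφ hH]
      simp
      ring
    have hder : deriv (fun x => hy q.2 x) q.1 = 6 * ε := by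
      have hg : HasDerivAt (fun x : ℝ => 6 * (ε * x) - 6 * q.2 + 4) (6 * ε) q.1 := by
        simpa using ((((hasDerivAt_id q.1).const_mul ε).const_mul 6).sub_const
          (6 * q.2)).add_const 4
      have hEq : (fun x => hy q.2 x) =ᶠ[𝓝 q.1] (fun x => 6 * (ε * x) - 6 * q.2 + 4) := by
        filter_upwards [h1', h2', hεev] with x hx1 hx2 hx3
        rw [hy, if_neg (not_lt.2 hx1.le), if_neg (not_le.2 hx2), if_pos h34l.le, hx3]
      rw [hEq.deriv_eq, hg.deriv]
    have hyq : hy q.2 q.1 = 6 * (ε * q.1) - 6 * q.2 + 4 := by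
      rw [hy, if_neg (not_lt.2 hgt.le), if_neg (not_le.2 hin), if_pos h34l.le, hεq]
    have key : q.2 - 1/2 < ε * q.1 := by
      rw [← hεq]
      have : |q.2 - 3/4| = -(q.2 - 3/4) := abs_of_neg (by linarith)
      rw [this] at hgt; linarith
    rw [hdet, hder, hyq]
    constructor
    · ring
    · linarith
  · -- Region D : 3/4 < y < 1
    have h3 : ∀ᶠ p : ℝ×ℝ in 𝓝 q, (3:ℝ)/4 < p.2 :=
      ContinuousAt.eventually_lt continuousAt_const (by fun_prop) h34r
    have hne : (2 * q.2 - 1 : ℝ) ≠ 0 := by intro h; linarith [h]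
    have hH : H =ᶠ[𝓝 q] fun p =>
        ((3 * (ε * p.1) + 5 * p.2 - 4) * (2 * p.2 - 1)⁻¹ * p.1, p.2) := by
      filter_upwards [h1, h2, h3, hεp] with p hp1 hp2 hp3 hp4
      have : hy p.2 p.1 = (3 * (ε * p.1) + 5 * p.2 - 4) * (2 * p.2 - 1)⁻¹ := by
        rw [hy, if_neg (not_lt.2 hp1.le), if_neg (not_le.2 hp2), if_neg (not_le.2 hp3), hp4,
          div_eq_mul_inv]
      simp [H, this]
    have hinvd : HasDerivAt (fun t : ℝ => (2 * t - 1)⁻¹) (-(2 * 1) / (2 * q.2 - 1) ^ 2) q.2 :=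
      (((hasDerivAt_id q.2).const_mul 2).sub_const 1).inv hne
    have hinv : HasFDerivAt (fun p : ℝ×ℝ => (2 * p.2 - 1)⁻¹)
        ((-(2 * 1) / (2 * q.2 - 1) ^ 2) • ContinuousLinearMap.snd ℝ ℝ ℝ) q :=
      hinvd.comp_hasFDerivAt q (hasFDerivAt_snd (𝕜 := ℝ) (p := q))
    have hφ := (((((hasFDerivAt_fst (𝕜 := ℝ) (p := q)).const_mul ε).const_mul 3).add
        ((hasFDerivAt_snd (𝕜 := ℝ) (p := q)).const_mul 5)).sub_const 4).mul hinv |>.mul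
        (hasFDerivAt_fst (𝕜 := ℝ) (p := q))
    have hdet : (fderiv ℝ H q).det = (6 * (ε * q.1) + 5 * q.2 - 4) / (2 * q.2 - 1) := by
      rw [fderiv_det_eq q _ _ hφ hH]
      simp
      field_simp
      ring
    have hder : deriv (fun x => hy q.2 x) q.1 = 3 * ε / (2 * q.2 - 1) := by
      have hg : HasDerivAt (fun x : ℝ => (3 * (ε * x) + 5 * q.2 - 4) / (2 * q.2 - 1))
          (3 * ε / (2 * q.2 - 1)) q.1 := by
        simpa [add_sub_assoc] using ((((hasDerivAt_id q.1).const_mul ε).const_mul 3).add_const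
          (5 * q.2 - 4)).div_const (2 * q.2 - 1)
      have hEq : (fun x => hy q.2 x) =ᶠ[𝓝 q.1]
          (fun x => (3 * (ε * x) + 5 * q.2 - 4) / (2 * q.2 - 1)) := by
        filter_upwards [h1', h2', hεev] with x hx1 hx2 hx3
        rw [hy, if_neg (not_lt.2 hx1.le), if_neg (not_le.2 hx2), if_neg (not_le.2 h34r), hx3]
      rw [hEq.deriv_eq, hg.deriv]
    have hyq : hy q.2 q.1 = (3 * (ε * q.1) + 5 * q.2 - 4) / (2 * q.2 - 1) := by
      rw [hy, if_neg (not_lt.2 hgt.le), if_neg (not_le.2 hin), if_neg (not_le.2 h34r), hεq]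
    have key : 1 - q.2 < ε * q.1 := by
      rw [← hεq]
      have : |q.2 - 3/4| = q.2 - 3/4 := abs_of_pos (by linarith)
      rw [this] at hgt; linarith
    have hdpos : (0:ℝ) < 2 * q.2 - 1 := by linarith
    rw [hdet, hder, hyq]
    constructor
    · field_simp
      ring
    · rw [le_div_iff₀ hdpos]
      linarith
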